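/- Let G be a finite simple non-complete graph. Then κ(G) + ᾱ(G) ≥ δ(G) + 2, where δ(G) is the minimum degree of G. -/

import Mathlib

namespace SimpleGraph

variable {V : Type*}

/-- `G` has an `(s,t)`-bipartite-hole. -/
def HasBipHole (G : SimpleGraph V) (s t : ℕ) : Prop :=
  ∃ S T : Finset V, Disjoint S T ∧ S.card = s ∧ T.card = t ∧
    ∀ a ∈ S, ∀ b ∈ T, ¬ G.Adj a b

/-- The bipartite-hole-number `ᾱ(G)`. -/
noncomputable def bipHoleNum (G : SimpleGraph V) : ℕ :=
  sInf {k | 0 < k ∧ ∃ s t : ℕ, 0 < s ∧ 0 < t ∧ s + t = k + 1 ∧ ¬ G.HasBipHole s t}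

/-- The vertex connectivity `κ(G)`: the minimum size of a vertex set `A` whose deletion
leaves a graph that is disconnected or has at most one vertex. -/
noncomputable def vertConn [Fintype V] [DecidableEq V] (G : SimpleGraph V) : ℕ :=
  sInf {k | ∃ A : Finset V, A.card = k ∧
    ((Aᶜ).card ≤ 1 ∨ ¬ (G.induce ((↑A : Set V)ᶜ)).Connected)}

end SimpleGraph

open SimpleGraph Finset

private lemma deg_bound {V : Type*} [Fintype V] [DecidableEq V] (G : SimpleGraph V)
    [DecidableRel G.Adj] (u : V) (A C : Finset V) (hu : u ∈ C)
    (hnbr : ∀ w, G.Adj u w → w ∈ A ∨ w ∈ C) :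
    G.minDegree + 1 ≤ A.card + C.card := by
  have hsub : G.neighborFinset u ⊆ (A ∪ C).erase u := by
    intro w hw
    rw [mem_neighborFinset] at hw
    refine Finset.mem_erase.2 ⟨fun h => G.loopless.irrefl u (h ▸ hw), ?_⟩
    rcases hnbr w hw with h | h
    · exact Finset.mem_union_left _ h
    · exact Finset.mem_union_right _ h
  have hdeg : G.degree u ≤ ((A ∪ C).erase u).card := by
    rw [← card_neighborFinset_eq_degree]; exact Finset.card_le_card hsub
  have hcard : ((A ∪ C).erase u).card = (A ∪ C).card - 1 :=
    Finset.card_erase_of_mem (Finset.mem_union_right _ hu)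
  have hpos : 1 ≤ (A ∪ C).card := Finset.card_pos.2 ⟨u, Finset.mem_union_right _ hu⟩
  have hAC : (A ∪ C).card ≤ A.card + C.card := Finset.card_union_le _ _
  have hmin : G.minDegree ≤ G.degree u := G.minDegree_le_degree u
  omega

/-- For every non-complete graph `G`, `κ(G) + ᾱ(G) ≥ δ(G) + 2`. -/
theorem stmt4 {V : Type*} [Fintype V] [DecidableEq V] [Nonempty V]
    (G : SimpleGraph V) [DecidableRel G.Adj]
    (hnc : ∃ x y : V, x ≠ y ∧ ¬ G.Adj x y) :
    G.minDegree + 2 ≤ G.vertConn + G.bipHoleNum := by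
  classical
  obtain ⟨x, y, hxy, hnadj⟩ := hnc
  -- the vertex-connectivity set is nonempty and its infimum is attained
  have hKne : {k : ℕ | ∃ A : Finset V, A.card = k ∧
      ((Aᶜ).card ≤ 1 ∨ ¬ (G.induce ((↑A : Set V)ᶜ)).Connected)}.Nonempty :=
    ⟨(Finset.univ : Finset V).card, Finset.univ, rfl, Or.inl (by simp)⟩
  obtain ⟨A, hAcard, hAprop⟩ := Nat.sInf_mem hKne
  have hvc : A.card = G.vertConn := hAcard
  -- the bip-hole set is nonempty and its infimum is attained
  have hBne : {k : ℕ | 0 < k ∧ ∃ s t : ℕ, 0 < s ∧ 0 < t ∧ s + t = k + 1 ∧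
      ¬ G.HasBipHole s t}.Nonempty := by
    refine ⟨Fintype.card V, Fintype.card_pos, Fintype.card V, 1, Fintype.card_pos,
      one_pos, rfl, ?_⟩
    rintro ⟨S, T, hd, hS, hT, -⟩
    have hSu : S = Finset.univ := Finset.card_eq_iff_eq_univ S |>.1 hS
    have : T = ∅ := by
      rw [hSu] at hd
      rw [Finset.eq_empty_iff_forall_notMem]
      intro a ha
      exact Finset.disjoint_left.1 hd.symm ha (Finset.mem_univ a)
    simp [this] at hT
  obtain ⟨hkpos, s, t, hs, ht, hst, hnohole⟩ := Nat.sInf_mem hBne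
  have hbh : s + t = G.bipHoleNum + 1 := hst
  by_contra hcon
  push_neg at hcon
  have key : A.card + s + t ≤ G.minDegree + 2 := by omega
  apply hnohole
  by_cases hA1 : (Aᶜ).card ≤ 1
  · -- small complement: δ ≤ κ, so s = t = 1
    have hcardV : A.card + (Aᶜ).card = Fintype.card V := Finset.card_add_card_compl A
    have hdx : G.degree x < Fintype.card V := G.degree_lt_card_verts x
    have hδ : G.minDegree ≤ G.degree x := G.minDegree_le_degree x
    have hst1 : s = 1 ∧ t = 1 := by omega
    refine ⟨{x}, {y}, by simp [hxy, Ne.symm hxy], by simp [hst1.1], by simp [hst1.2], ?_⟩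
    intro a ha b hb
    simp only [Finset.mem_singleton] at ha hb
    subst ha; subst hb; exact hnadj
  · -- the deleted graph is disconnected
    have hnc2 : ¬ (G.induce ((↑A : Set V)ᶜ)).Connected := hAprop.resolve_left hA1
    set s' : Set V := (↑A : Set V)ᶜ with hs'
    set H := G.induce s' with hH
    have hAne : (Aᶜ : Finset V).Nonempty := Finset.card_pos.1 (by omega)
    obtain ⟨w₀, hw₀⟩ := hAne
    have hne : Nonempty ↥s' := ⟨⟨w₀, by simpa [hs'] using hw₀⟩⟩
    have hpre : ¬ H.Preconnected := fun hp => hnc2 ⟨hp⟩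
    simp only [SimpleGraph.Preconnected, not_forall] at hpre
    obtain ⟨u, v, huv⟩ := hpre
    set C : Finset V :=
      Finset.univ.filter (fun w => ∃ hw : w ∈ s', H.Reachable u ⟨w, hw⟩) with hC
    set D : Finset V :=
      Finset.univ.filter (fun w => ∃ hw : w ∈ s', ¬ H.Reachable u ⟨w, hw⟩) with hD
    have hmemC : ∀ w, w ∈ C ↔ ∃ hw : w ∈ s', H.Reachable u ⟨w, hw⟩ := by
      intro w; simp [hC]
    have hmemD : ∀ w, w ∈ D ↔ ∃ hw : w ∈ s', ¬ H.Reachable u ⟨w, hw⟩ := by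
      intro w; simp [hD]
    have huC : (u : V) ∈ C := (hmemC _).2 ⟨u.2, Reachable.refl u⟩
    have hvD : (v : V) ∈ D := (hmemD _).2 ⟨v.2, huv⟩
    have hCD : Disjoint C D := by
      rw [Finset.disjoint_left]
      intro w hwC hwD
      obtain ⟨h1, hr⟩ := (hmemC w).1 hwC
      obtain ⟨h2, hnr⟩ := (hmemD w).1 hwD
      exact hnr hr
    have hadjH : ∀ (a b : V) (ha : a ∈ s') (hb : b ∈ s'),
        G.Adj a b → H.Adj ⟨a, ha⟩ ⟨b, hb⟩ := fun a b ha hb h => h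
    have hnoedge : ∀ a ∈ C, ∀ b ∈ D, ¬ G.Adj a b := by
      intro a ha b hb hab
      obtain ⟨ha', hra⟩ := (hmemC a).1 ha
      obtain ⟨hb', hrb⟩ := (hmemD b).1 hb
      exact hrb (hra.trans (hadjH a b ha' hb' hab).reachable)
    have hnbrC : ∀ w, G.Adj (u : V) w → w ∈ A ∨ w ∈ C := by
      intro w hw
      by_cases hwA : w ∈ A
      · exact Or.inl hwA
      · refine Or.inr ((hmemC w).2 ⟨by simpa [hs'] using hwA, ?_⟩)
        exact (hadjH u w u.2 (by simpa [hs'] using hwA) hw).reachable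
    have hnbrD : ∀ w, G.Adj (v : V) w → w ∈ A ∨ w ∈ D := by
      intro w hw
      by_cases hwA : w ∈ A
      · exact Or.inl hwA
      · have hws : w ∈ s' := by simpa [hs'] using hwA
        refine Or.inr ((hmemD w).2 ⟨hws, fun hr => huv ?_⟩)
        exact hr.trans (hadjH w v hws v.2 hw.symm).reachable
    have hCbd : G.minDegree + 1 ≤ A.card + C.card := deg_bound G u A C huC hnbrC
    have hDbd : G.minDegree + 1 ≤ A.card + D.card := deg_bound G v A D hvD hnbrD
    have hsC : s ≤ C.card := by omega
    have htD : t ≤ D.card := by omega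
    obtain ⟨S, hSsub, hScard⟩ := Finset.exists_subset_card_eq hsC
    obtain ⟨T, hTsub, hTcard⟩ := Finset.exists_subset_card_eq htD
    exact ⟨S, T, hCD.mono hSsub hTsub, hScard, hTcard,
      fun a ha b hb => hnoedge a (hSsub ha) b (hTsub hb)⟩
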